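/- Let A ∈ ℂ^{n×n} be sectorial with numerical range contained in the open upper half-plane, and let φ₁(A) ≥ … ≥ φₙ(A) ∈ (0,π) be its phases. Then the largest phase satisfies φ₁(A) = max over unit vectors x of arg(x*Ax), and the smallest phase satisfies φₙ(A) = min over unit vectors x of arg(x*Ax). -/

import Mathlib

open Matrix

open Complex Finset in
lemma arg_bound_aux (m : ℕ) (c φv : Fin m → ℝ) (hc : ∀ i, 0 ≤ c i) (j : Fin m) (hj : 0 < c j)
    (hφ : ∀ i, φv i ∈ Set.Ioo 0 Real.pi) (θ : ℝ) (hθ : θ ∈ Set.Ioo 0 Real.pi) :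
    ((∀ i, φv i ≤ θ) → (∑ i, (c i : ℂ) * Complex.exp ((φv i : ℂ) * Complex.I)).arg ≤ θ) ∧
    ((∀ i, θ ≤ φv i) → θ ≤ (∑ i, (c i : ℂ) * Complex.exp ((φv i : ℂ) * Complex.I)).arg) := by
  set z : ℂ := ∑ i, (c i : ℂ) * Complex.exp ((φv i : ℂ) * Complex.I) with hz
  have him : z.im = ∑ i, c i * Real.sin (φv i) := by
    rw [hz, Complex.im_sum]
    refine Finset.sum_congr rfl fun i _ => ?_
    simp [Complex.exp_ofReal_mul_I_im]
  have himpos : 0 < z.im := by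
    rw [him]
    refine Finset.sum_pos' (fun i _ => mul_nonneg (hc i)
      (Real.sin_nonneg_of_nonneg_of_le_pi (hφ i).1.le (hφ i).2.le)) ⟨j, Finset.mem_univ j, ?_⟩
    exact mul_pos hj (Real.sin_pos_of_pos_of_lt_pi (hφ j).1 (hφ j).2)
  have hz0 : z ≠ 0 := fun h => by simp [h] at himpos
  have hargpos : 0 < z.arg := by
    rcases lt_or_eq_of_le (Complex.arg_nonneg_iff.2 himpos.le) with h | h
    · exact h
    · exfalso
      have := Complex.arg_eq_zero_iff.1 h.symm
      exact himpos.ne' this.2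
  have harglt : z.arg < Real.pi := Complex.arg_lt_pi_iff.2 (Or.inr himpos.ne')
  have key : (Complex.exp (-(θ:ℂ) * Complex.I) * z).im = ‖z‖ * Real.sin (z.arg - θ) := by
    have h1 : Complex.exp (-(θ:ℂ) * Complex.I) * z
        = (‖z‖ : ℂ) * Complex.exp ((↑(z.arg - θ)) * Complex.I) := by
      conv_lhs => rw [← Complex.norm_mul_exp_arg_mul_I z]
      rw [← mul_assoc, mul_comm (Complex.exp _) ((‖z‖ : ℂ)), mul_assoc,
        ← Complex.exp_add]
      push_cast
      ring_nf
    rw [h1]; simp [Complex.mul_im, ← Complex.ofReal_sub, Complex.exp_ofReal_mul_I_im]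
  have key2 : (Complex.exp (-(θ:ℂ) * Complex.I) * z).im
      = ∑ i, c i * Real.sin (φv i - θ) := by
    rw [hz, Finset.mul_sum, Complex.im_sum]
    refine Finset.sum_congr rfl fun i _ => ?_
    rw [← mul_assoc, mul_comm (Complex.exp _) ((c i : ℂ)), mul_assoc, ← Complex.exp_add]
    have : -(θ:ℂ) * Complex.I + (φv i : ℂ) * Complex.I = (↑(φv i - θ)) * Complex.I := by
      push_cast; ring
    rw [this]; simp [Complex.mul_im, ← Complex.ofReal_sub, Complex.exp_ofReal_mul_I_im]
  have habs : 0 < ‖z‖ := norm_pos_iff.mpr hz0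
  constructor
  · intro hle
    by_contra hcon
    push_neg at hcon
    have hsinpos : 0 < Real.sin (z.arg - θ) :=
      Real.sin_pos_of_pos_of_lt_pi (by linarith) (by linarith [hθ.1])
    have hsum : ∑ i, c i * Real.sin (φv i - θ) ≤ 0 := by
      refine Finset.sum_nonpos fun i _ => mul_nonpos_of_nonneg_of_nonpos (hc i) ?_
      exact Real.sin_nonpos_of_nonpos_of_neg_pi_le (by linarith [hle i])
        (by linarith [(hφ i).1, hθ.2])
    nlinarith [key, key2]
  · intro hge
    by_contra hcon
    push_neg at hcon
    have hsinneg : Real.sin (z.arg - θ) < 0 :=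
      Real.sin_neg_of_neg_of_neg_pi_lt (by linarith) (by linarith [hθ.2])
    have hsum : 0 ≤ ∑ i, c i * Real.sin (φv i - θ) := by
      refine Finset.sum_nonneg fun i _ => mul_nonneg (hc i) ?_
      exact Real.sin_nonneg_of_nonneg_of_le_pi (by linarith [hge i])
        (by linarith [(hφ i).2, hθ.1])
    nlinarith [key, key2]


/-- The largest and smallest phases of a sectorial matrix with numerical range in the
open upper half-plane are the maximum and minimum of `arg (x* A x)` over unit vectors. -/
theorem phase_max_min (n : ℕ) (hn : 0 < n)
    (A Q : Matrix (Fin n) (Fin n) ℂ) (φ : Fin n → ℝ)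
    (hQ : IsUnit Q) (hφ : ∀ i, φ i ∈ Set.Ioo 0 Real.pi)
    (hA : A = Qᴴ * Matrix.diagonal (fun i => Complex.exp ((φ i : ℂ) * Complex.I)) * Q) :
    IsGreatest {θ : ℝ | ∃ x : Fin n → ℂ, star x ⬝ᵥ x = 1 ∧ θ = (star x ⬝ᵥ (A *ᵥ x)).arg}
      (sSup (Set.range φ)) ∧
    IsLeast {θ : ℝ | ∃ x : Fin n → ℂ, star x ⬝ᵥ x = 1 ∧ θ = (star x ⬝ᵥ (A *ᵥ x)).arg}
      (sInf (Set.range φ)) := by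
  haveI : Nonempty (Fin n) := ⟨⟨0, hn⟩⟩
  have hdet : IsUnit Q.det := (Matrix.isUnit_iff_isUnit_det _).mp hQ
  have hQQ : Q⁻¹ * Q = 1 := Matrix.nonsing_inv_mul Q hdet
  have hQQ' : Q * Q⁻¹ = 1 := Matrix.mul_nonsing_inv Q hdet
  -- quadratic form identity
  have hform : ∀ x : Fin n → ℂ, star x ⬝ᵥ (A *ᵥ x)
      = ∑ i, ((Complex.normSq ((Q *ᵥ x) i) : ℝ) : ℂ) * Complex.exp ((φ i : ℂ) * Complex.I) := by
    intro x
    rw [hA, ← Matrix.mulVec_mulVec, ← Matrix.mulVec_mulVec, Matrix.dotProduct_mulVec,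
      ← Matrix.star_mulVec]
    unfold dotProduct
    refine Finset.sum_congr rfl fun i _ => ?_
    rw [Matrix.mulVec_diagonal]
    simp only [Pi.star_apply, RCLike.star_def]
    rw [← mul_assoc, mul_comm ((starRingEnd ℂ) ((Q *ᵥ x) i)), mul_assoc,
      mul_comm ((starRingEnd ℂ) ((Q *ᵥ x) i)), Complex.mul_conj, mul_comm]
  -- nonzero image
  have hy0 : ∀ x : Fin n → ℂ, star x ⬝ᵥ x = 1 → ∃ j, 0 < Complex.normSq ((Q *ᵥ x) j) := by
    intro x hx
    have hxne : x ≠ 0 := by rintro rfl; simp at hx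
    have hyne : Q *ᵥ x ≠ 0 := by
      intro h
      apply hxne
      have : Q⁻¹ *ᵥ (Q *ᵥ x) = x := by rw [Matrix.mulVec_mulVec, hQQ, Matrix.one_mulVec]
      rw [← this, h, Matrix.mulVec_zero]
    obtain ⟨j, hj⟩ := Function.ne_iff.1 hyne
    exact ⟨j, Complex.normSq_pos.2 hj⟩
  -- extremal indices
  obtain ⟨i₀, hi₀⟩ := Finite.exists_max φ
  obtain ⟨i₁, hi₁⟩ := Finite.exists_min φ
  have hsup : sSup (Set.range φ) = φ i₀ :=
    le_antisymm (csSup_le (Set.range_nonempty φ) (by rintro _ ⟨j, rfl⟩; exact hi₀ j))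
      (le_csSup (Set.finite_range φ).bddAbove ⟨i₀, rfl⟩)
  have hinf : sInf (Set.range φ) = φ i₁ :=
    le_antisymm (csInf_le (Set.finite_range φ).bddBelow ⟨i₁, rfl⟩)
      (le_csInf (Set.range_nonempty φ) (by rintro _ ⟨j, rfl⟩; exact hi₁ j))
  -- achieving a given phase
  have hach : ∀ k : Fin n, ∃ x : Fin n → ℂ, star x ⬝ᵥ x = 1 ∧
      (star x ⬝ᵥ (A *ᵥ x)).arg = φ k := by
    intro k
    set u : Fin n → ℂ := Q⁻¹ *ᵥ Pi.single k 1 with hu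
    have hQu : Q *ᵥ u = Pi.single k 1 := by
      rw [hu, Matrix.mulVec_mulVec, hQQ', Matrix.one_mulVec]
    set s : ℝ := ∑ i, Complex.normSq (u i) with hs
    have hsu : star u ⬝ᵥ u = (s : ℂ) := by
      unfold dotProduct
      rw [hs]
      push_cast
      refine Finset.sum_congr rfl fun i _ => ?_
      simp [Complex.normSq_eq_conj_mul_self]
    have hspos : 0 < s := by
      have hune : u ≠ 0 := by
        intro h
        have : (Pi.single k 1 : Fin n → ℂ) = 0 := by rw [← hQu, h, Matrix.mulVec_zero]
        have := congrFun this k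
        simp at this
      obtain ⟨j, hj⟩ := Function.ne_iff.1 hune
      exact Finset.sum_pos' (fun i _ => Complex.normSq_nonneg _)
        ⟨j, Finset.mem_univ j, Complex.normSq_pos.2 hj⟩
    set a : ℝ := (Real.sqrt s)⁻¹ with ha
    have hapos : 0 < a := inv_pos.2 (Real.sqrt_pos.2 hspos)
    have hargexp : (Complex.exp ((φ k : ℂ) * Complex.I)).arg = φ k := by
      rw [Complex.exp_mul_I]
      exact Complex.arg_cos_add_sin_mul_I
        ⟨by linarith [(hφ k).1, Real.pi_pos], (hφ k).2.le⟩
    refine ⟨(a : ℂ) • u, ?_, ?_⟩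
    · rw [star_smul, smul_dotProduct, dotProduct_smul, hsu]
      have h1 : a * (a * s) = 1 := by
        rw [ha]
        field_simp
        rw [Real.sq_sqrt hspos.le]
      simp only [smul_eq_mul, RCLike.star_def, Complex.conj_ofReal]
      norm_cast
    · have hQx : Q *ᵥ ((a:ℂ) • u) = (a:ℂ) • (Pi.single k 1 : Fin n → ℂ) := by
        rw [Matrix.mulVec_smul, hQu]
      rw [hform, hQx]
      rw [Finset.sum_eq_single k (fun b _ hbk => by
        simp [Pi.single_eq_of_ne hbk]) (fun h => absurd (Finset.mem_univ k) h)]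
      have h2 : Complex.normSq (((a:ℂ) • (Pi.single k 1 : Fin n → ℂ)) k) = a * a := by
        simp [Complex.normSq_ofReal]
      rw [h2, Complex.arg_real_mul _ (mul_pos hapos hapos), hargexp]
  refine ⟨⟨?_, ?_⟩, ?_, ?_⟩
  · rw [hsup]
    obtain ⟨x, hx1, hx2⟩ := hach i₀
    exact ⟨x, hx1, hx2.symm⟩
  · rintro θ ⟨x, hx1, rfl⟩
    rw [hsup, hform x]
    obtain ⟨j, hj⟩ := hy0 x hx1
    exact (arg_bound_aux n (fun i => Complex.normSq ((Q *ᵥ x) i)) φ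
      (fun i => Complex.normSq_nonneg _) j hj hφ (φ i₀) (hφ i₀)).1 hi₀
  · rw [hinf]
    obtain ⟨x, hx1, hx2⟩ := hach i₁
    exact ⟨x, hx1, hx2.symm⟩
  · rintro θ ⟨x, hx1, rfl⟩
    rw [hinf, hform x]
    obtain ⟨j, hj⟩ := hy0 x hx1
    exact (arg_bound_aux n (fun i => Complex.normSq ((Q *ᵥ x) i)) φ
      (fun i => Complex.normSq_nonneg _) j hj hφ (φ i₁) (hφ i₁)).2 hi₁
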